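/- If the sequent Γ, A∨B is minimal and neither Γ, A nor Γ, B is valid, then the sequent Γ, A, B is minimal. -/

import Mathlib

/-- Propositional formulas in negation normal form. -/
inductive Fm : Type
  | pos : ℕ → Fm
  | neg : ℕ → Fm
  | conj : Fm → Fm → Fm
  | disj : Fm → Fm → Fm
  deriving DecidableEq

/-- Boolean evaluation of a formula under a valuation. -/
def Fm.eval (v : ℕ → Bool) : Fm → Bool
  | .pos p => v p
  | .neg p => !(v p)
  | .conj a b => a.eval v && b.eval v
  | .disj a b => a.eval v || b.eval v

/-- A sequent (nonempty multiset of formulas) is valid if under every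
valuation some member is true (i.e. the disjunction is a tautology). -/
def Valid (Γ : Multiset Fm) : Prop :=
  Γ ≠ 0 ∧ ∀ v : ℕ → Bool, ∃ A ∈ Γ, Fm.eval v A = true

/-- A sequent is minimal if it is valid and no proper sub-multiset is valid. -/
def MinimalSeq (Γ : Multiset Fm) : Prop :=
  Valid Γ ∧ ∀ Δ : Multiset Fm, Δ < Γ → ¬ Valid Δ

lemma valid_mono {Δ E : Multiset Fm} (hle : Δ ≤ E) (hE : E ≠ 0) (h : Valid Δ) :
    Valid E := by
  refine ⟨hE, fun v => ?_⟩
  obtain ⟨C, hC, hCe⟩ := h.2 v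
  exact ⟨C, Multiset.mem_of_le hle hC, hCe⟩

theorem stmt_5 (Γ : Multiset Fm) (A B : Fm)
    (hmin : MinimalSeq (Γ + {Fm.disj A B}))
    (hA : ¬ Valid (Γ + {A})) (hB : ¬ Valid (Γ + {B})) :
    MinimalSeq (Γ + {A, B}) := by
  obtain ⟨⟨hne, hval⟩, hminl⟩ := hmin
  constructor
  · refine ⟨by simp, fun v => ?_⟩
    obtain ⟨C, hC, hCe⟩ := hval v
    rcases Multiset.mem_add.1 hC with h | h
    · exact ⟨C, Multiset.mem_add.2 (Or.inl h), hCe⟩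
    · have hCeq : C = Fm.disj A B := by simpa using h
      subst hCeq
      simp only [Fm.eval, Bool.or_eq_true] at hCe
      rcases hCe with h' | h'
      · exact ⟨A, by simp, h'⟩
      · exact ⟨B, by simp, h'⟩
  · intro Δ hΔ hVΔ
    by_cases hAB : ({A, B} : Multiset Fm) ≤ Δ
    · set Δ' := Δ - {A, B} with hΔ'def
      have hΔeq : Δ' + {A, B} = Δ := tsub_add_cancel_of_le hAB
      have hΔ'lt : Δ' < Γ := by
        have : Δ' + ({A, B} : Multiset Fm) < Γ + {A, B} := hΔeq ▸ hΔ
        exact lt_of_add_lt_add_right this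
      refine hminl (Δ' + {Fm.disj A B}) (add_lt_add_left hΔ'lt _) ⟨by simp, fun v => ?_⟩
      obtain ⟨C, hC, hCe⟩ := hVΔ.2 v
      rw [← hΔeq] at hC
      rcases Multiset.mem_add.1 hC with h | h
      · exact ⟨C, Multiset.mem_add.2 (Or.inl h), hCe⟩
      · have : C = A ∨ C = B := by simpa using h
        refine ⟨Fm.disj A B, by simp, ?_⟩
        rcases this with rfl | rfl <;> simp [Fm.eval, hCe]
    · have hle : Δ ≤ Γ + {A} ∨ Δ ≤ Γ + {B} := by
        by_cases hABeq : A = B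
        · subst hABeq
          left
          have hcnt : Δ.count A ≤ 1 := by
            by_contra hgt
            push_neg at hgt
            apply hAB
            rw [Multiset.le_iff_count]
            intro C
            by_cases hCA : C = A
            · subst hCA; simp; omega
            · simp [Multiset.count_cons, Multiset.count_singleton, hCA]
          rw [Multiset.le_iff_count]
          intro C
          have h1 := Multiset.count_le_of_le C hΔ.le
          simp only [Multiset.count_add, Multiset.insert_eq_cons, Multiset.count_cons,
            Multiset.count_singleton] at h1 ⊢
          by_cases hCA : C = A
          · simp only [if_pos hCA]
            subst hCA
            omega
          · simp only [if_neg hCA] at h1 ⊢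
            omega
        · have hnot : ∃ C, Δ.count C < ({A, B} : Multiset Fm).count C := by
            by_contra h
            push_neg at h
            exact hAB (Multiset.le_iff_count.2 h)
          obtain ⟨C, hC⟩ := hnot
          have hCcnt : ({A, B} : Multiset Fm).count C =
              (if C = A then 1 else 0) + (if C = B then 1 else 0) := by
            simp [Multiset.count_cons, Multiset.count_singleton, add_comm]
          have hCab : C = A ∨ C = B := by
            by_contra h
            push_neg at h
            rw [hCcnt] at hC
            simp [h.1, h.2] at hC
          have key : ∀ X Y : Fm, Δ.count X = 0 →
              (∀ D : Fm, (if D = X then (1:ℕ) else 0) + (if D = Y then 1 else 0) =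
                (if D = A then 1 else 0) + (if D = B then 1 else 0)) →
              Δ ≤ Γ + {Y} := by
            intro X Y hX hsum
            rw [Multiset.le_iff_count]
            intro D
            have h1 := Multiset.count_le_of_le D hΔ.le
            have h2 := hsum D
            simp only [Multiset.count_add, Multiset.insert_eq_cons, Multiset.count_cons,
              Multiset.count_singleton] at h1 ⊢
            by_cases hDX : D = X
            · subst hDX
              simp only [if_pos rfl] at h2
              simp [hX]
            · simp only [if_neg hDX] at h2
              omega
          rcases hCab with rfl | rfl
          · have hC0 : Δ.count C = 0 := by
              rw [hCcnt, if_pos rfl, if_neg hABeq] at hC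
              omega
            exact Or.inr (key C B hC0 (fun D => rfl))
          · have hC0 : Δ.count C = 0 := by
              rw [hCcnt, if_neg (Ne.symm hABeq), if_pos rfl] at hC
              omega
            exact Or.inl (key C A hC0 (fun D => by ring))
      rcases hle with h | h
      · exact hA (valid_mono h (by simp) hVΔ)
      · exact hB (valid_mono h (by simp) hVΔ)
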